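/- Let k ∈ [0,1), λ > 0 and s ≥ 1. Let h : [s,∞) → ℝ be continuous with h(t) ≥ 0 for all t ≥ s. If w : [s,∞) → ℝ is twice continuously differentiable with w''(t) − λ² t^{−2k} w(t) = h(t) for all t ≥ s and w(s) = 0, w'(s) = 0, then w(t) ≥ 0 for all t ≥ s. -/

import Mathlib

open Real

/-- Minimum-type principle for the operator `∂_t² - λ² t^(-2k)` on `[s,∞)`:
a supersolution with trivial data at `s` is nonnegative. -/
theorem minimum_principle
    (k : ℝ) (hk : k ∈ Set.Ico (0:ℝ) 1) (lam : ℝ) (hlam : 0 < lam)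
    (s : ℝ) (hs : 1 ≤ s)
    (h w : ℝ → ℝ)
    (hhcont : ContinuousOn h (Set.Ici s))
    (hhnn : ∀ t : ℝ, s ≤ t → 0 ≤ h t)
    (hwd : ∀ t : ℝ, s ≤ t → DifferentiableAt ℝ w t)
    (hwd2 : ∀ t : ℝ, s ≤ t → DifferentiableAt ℝ (deriv w) t)
    (hwc2 : ContinuousOn (deriv (deriv w)) (Set.Ici s))
    (hode : ∀ t : ℝ, s ≤ t → deriv (deriv w) t - lam^2 * t ^ (-(2*k)) * w t = h t)
    (hw0 : w s = 0) (hw0' : deriv w s = 0) :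
    ∀ t : ℝ, s ≤ t → 0 ≤ w t := by
  obtain ⟨hk0, hk1⟩ := hk
  -- derivative of the exponential comparison function
  have hexp : ∀ (c t : ℝ), HasDerivAt (fun r => c * Real.exp (lam * (r - s)))
      (c * lam * Real.exp (lam * (t - s))) t := by
    intro c t
    have h1 : HasDerivAt (fun r : ℝ => lam * (r - s)) lam t := by
      simpa using ((hasDerivAt_id t).sub_const s).const_mul lam
    have h2 := (Real.hasDerivAt_exp (lam * (t - s))).comp t h1
    have h3 := h2.const_mul c
    refine h3.congr_deriv ?_
    ring
  -- main comparison claim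
  have key : ∀ ε : ℝ, 0 < ε → ∀ t1 : ℝ, s ≤ t1 → ∀ t ∈ Set.Icc s t1,
      0 < w t + ε * Real.exp (lam * (t - s)) := by
    intro ε hε t1 ht1
    by_contra hcon
    push_neg at hcon
    obtain ⟨t0, ht0, hGt0⟩ := hcon
    set G : ℝ → ℝ := fun t => w t + ε * Real.exp (lam * (t - s)) with hGdef
    set G' : ℝ → ℝ := fun t => deriv w t + ε * lam * Real.exp (lam * (t - s)) with hG'def
    have hGd : ∀ t : ℝ, s ≤ t → HasDerivAt G (G' t) t := fun t ht =>
      ((hwd t ht).hasDerivAt).add (hexp ε t)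
    have hG'd : ∀ t : ℝ, s ≤ t → HasDerivAt G'
        (deriv (deriv w) t + ε * lam * lam * Real.exp (lam * (t - s))) t := by
      intro t ht
      exact ((hwd2 t ht).hasDerivAt).add (hexp (ε * lam) t)
    -- the bad set
    have cE : Continuous fun t : ℝ => ε * Real.exp (lam * (t - s)) := by continuity
    have hGc : ContinuousOn G (Set.Icc s t1) := by
      apply ContinuousOn.add
      · exact fun t ht => ((hwd t ht.1).continuousAt).continuousWithinAt
      · exact cE.continuousOn
    set B : Set ℝ := Set.Icc s t1 ∩ G ⁻¹' Set.Iic 0 with hBdef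
    have hBclosed : IsClosed B :=
      hGc.preimage_isClosed_of_isClosed isClosed_Icc isClosed_Iic
    have hBne : B.Nonempty := ⟨t0, ht0, hGt0⟩
    have hBbdd : BddBelow B := ⟨s, fun x hx => hx.1.1⟩
    set T : ℝ := sInf B with hTdef
    have hTB : T ∈ B := hBclosed.csInf_mem hBne hBbdd
    have hTmem : T ∈ Set.Icc s t1 := hTB.1
    have hGT : G T ≤ 0 := hTB.2
    have hGs : G s = ε := by simp [hGdef, hw0]
    have hsT : s < T := by
      rcases lt_or_eq_of_le hTmem.1 with h' | h'
      · exact h'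
      · exfalso; rw [← h', hGs] at hGT; linarith
    -- G is positive strictly before T
    have hpos : ∀ x ∈ Set.Ico s T, 0 < G x := by
      intro x hx
      by_contra hle
      push_neg at hle
      have hxB : x ∈ B := ⟨⟨hx.1, le_trans hx.2.le hTmem.2⟩, hle⟩
      exact absurd (csInf_le hBbdd hxB) (not_le.2 hx.2)
    -- G' is monotone on [s, T]
    have hG'c : ContinuousOn G' (Set.Icc s T) := by
      apply ContinuousOn.add
      · exact fun t ht => ((hwd2 t ht.1).continuousAt).continuousWithinAt
      · exact (by continuity : Continuous fun t : ℝ => ε * lam * Real.exp (lam * (t - s))).continuousOn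
    have hmonoG' : MonotoneOn G' (Set.Icc s T) := by
      apply monotoneOn_of_deriv_nonneg (convex_Icc s T) hG'c
      · rw [interior_Icc]
        intro x hx
        exact ((hG'd x hx.1.le).differentiableAt).differentiableWithinAt
      · rw [interior_Icc]
        intro x hx
        have hxs : s ≤ x := hx.1.le
        rw [(hG'd x hxs).deriv]
        have hox := hode x hxs
        have hdd : deriv (deriv w) x = h x + lam ^ 2 * x ^ (-(2*k)) * w x := by linarith
        rw [hdd]
        have hp0 : (0:ℝ) ≤ x ^ (-(2*k)) := Real.rpow_nonneg (by linarith) _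
        have hp1 : x ^ (-(2*k)) ≤ 1 :=
          Real.rpow_le_one_of_one_le_of_nonpos (by linarith) (by linarith)
        have hEx : (0:ℝ) < Real.exp (lam * (x - s)) := Real.exp_pos _
        have hhx : 0 ≤ h x := hhnn x hxs
        have hGx : 0 < w x + ε * Real.exp (lam * (x - s)) := hpos x ⟨hxs, hx.2⟩
        nlinarith [mul_nonneg (mul_nonneg (sq_nonneg lam) hp0) hGx.le,
          mul_nonneg (mul_nonneg (sq_nonneg lam) (sub_nonneg.2 hp1))
            (mul_nonneg hε.le hEx.le)]
    have hG's : G' s = ε * lam := by simp [hG'def, hw0']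
    -- hence G' ≥ 0 on [s, T], so G is monotone on [s, T]
    have hGcT : ContinuousOn G (Set.Icc s T) :=
      hGc.mono (Set.Icc_subset_Icc_right hTmem.2)
    have hmonoG : MonotoneOn G (Set.Icc s T) := by
      apply monotoneOn_of_deriv_nonneg (convex_Icc s T) hGcT
      · rw [interior_Icc]
        intro x hx
        exact ((hGd x hx.1.le).differentiableAt).differentiableWithinAt
      · rw [interior_Icc]
        intro x hx
        rw [(hGd x hx.1.le).deriv]
        have := hmonoG' (Set.left_mem_Icc.2 hsT.le) ⟨hx.1.le, hx.2.le⟩ hx.1.le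
        rw [hG's] at this
        nlinarith
    have := hmonoG (Set.left_mem_Icc.2 hsT.le) (Set.right_mem_Icc.2 hsT.le) hsT.le
    rw [hGs] at this
    linarith
  -- conclude by letting ε → 0
  intro t ht
  by_contra hneg
  push_neg at hneg
  have hE : (0:ℝ) < Real.exp (lam * (t - s)) := Real.exp_pos _
  have hεpos : 0 < -(w t) / (2 * Real.exp (lam * (t - s))) := by
    apply div_pos (by linarith) (by positivity)
  have hkey := key _ hεpos t ht t ⟨ht, le_refl t⟩
  have hcalc : -(w t) / (2 * Real.exp (lam * (t - s))) * Real.exp (lam * (t - s))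
      = -(w t) / 2 := by
    field_simp
  rw [hcalc] at hkey
  linarith
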